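/- Let μ be an ε-product probability measure on V = V₁×⋯×V_k and let T₁,T₂ ⊆ [k]. Then for every f ∈ L²(V,μ), ‖A_{T₂}(A_{T₁}f) − A_{T₁∩T₂}f‖₂ ≤ |T₁|·|T₂|·ε·‖f‖₂. -/

import Mathlib

open Finset

namespace GLL

variable {k : ℕ} {V : Fin k → Type} [∀ i, Fintype (V i)] [∀ i, DecidableEq (V i)]

/-- Expectation of `f` with respect to the (finitely supported) measure `μ`. -/
def expect (μ f : (∀ i, V i) → ℝ) : ℝ := ∑ x, μ x * f x

/-- `μ` is a probability measure. -/
def IsProb (μ : (∀ i, V i) → ℝ) : Prop := (∀ x, 0 ≤ μ x) ∧ ∑ x, μ x = 1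

/-- The marginal `μ_S` evaluated at (the `S`-coordinates of) `x`. -/
def marg (μ : (∀ i, V i) → ℝ) (S : Finset (Fin k)) (x : ∀ i, V i) : ℝ :=
  ∑ z, if ∀ i ∈ S, z i = x i then μ z else 0

/-- The link (conditional) measure `μ_x` for `x ∈ V_S`, viewed as a measure on
full points agreeing with `x` on `S`. -/
noncomputable def cond (μ : (∀ i, V i) → ℝ) (S : Finset (Fin k)) (x z : ∀ i, V i) : ℝ :=
  if ∀ i ∈ S, z i = x i then μ z / marg μ S x else 0

/-- The averaging operator `A_S`: `A_S f (x) = E_{y ∼ μ_{x_S}} [f(x_S, y)]`.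
Applied to an `S'`-junta `f`, this is also the operator `A_{S',S}`. -/
noncomputable def Aop (μ : (∀ i, V i) → ℝ) (S : Finset (Fin k)) (f : (∀ i, V i) → ℝ)
    (x : ∀ i, V i) : ℝ :=
  ∑ z, cond μ S x z * f z

/-- The Efron–Stein component `f^{=S} = ∑_{T ⊆ S} (-1)^{|S∖T|} A_T f`. -/
noncomputable def ES (μ : (∀ i, V i) → ℝ) (S : Finset (Fin k)) (f : (∀ i, V i) → ℝ)
    (x : ∀ i, V i) : ℝ :=
  ∑ T ∈ S.powerset, (-1 : ℝ) ^ (S.card - T.card) * Aop μ T f x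

/-- The low-degree part `f^{≤ d} = ∑_{|S| ≤ d} f^{=S}`. -/
noncomputable def lowPart (μ : (∀ i, V i) → ℝ) (d : ℕ) (f : (∀ i, V i) → ℝ)
    (x : ∀ i, V i) : ℝ :=
  ∑ S ∈ univ.powerset.filter (fun S : Finset (Fin k) => S.card ≤ d), ES μ S f x

/-- The Laplacian `L_S[f] = ∑_{T ⊇ S} f^{=T}`. -/
noncomputable def Lap (μ : (∀ i, V i) → ℝ) (S : Finset (Fin k)) (f : (∀ i, V i) → ℝ)
    (x : ∀ i, V i) : ℝ :=
  ∑ T ∈ univ.powerset.filter (fun T : Finset (Fin k) => S ⊆ T), ES μ T f x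

/-- The truncated Laplacian `L_S^{≤d}[f] = ∑_{T ⊇ S, |T| ≤ d} f^{=T}`. -/
noncomputable def LapLe (μ : (∀ i, V i) → ℝ) (d : ℕ) (S : Finset (Fin k))
    (f : (∀ i, V i) → ℝ) (x : ∀ i, V i) : ℝ :=
  ∑ T ∈ univ.powerset.filter (fun T : Finset (Fin k) => S ⊆ T ∧ T.card ≤ d), ES μ T f x

/-- The influence `I_{S,x}[f] = ‖L_S[f](x,·)‖²_{L²(μ_x)}`. -/
noncomputable def Inf (μ : (∀ i, V i) → ℝ) (S : Finset (Fin k)) (f : (∀ i, V i) → ℝ)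
    (x : ∀ i, V i) : ℝ :=
  ∑ z, cond μ S x z * (Lap μ S f z) ^ 2

/-- The truncated influence `I^{≤d}_{S,x}[f] = ‖L_S^{≤d}[f](x,·)‖²_{L²(μ_x)}`. -/
noncomputable def InfLe (μ : (∀ i, V i) → ℝ) (d : ℕ) (S : Finset (Fin k))
    (f : (∀ i, V i) → ℝ) (x : ∀ i, V i) : ℝ :=
  ∑ z, cond μ S x z * (LapLe μ d S f z) ^ 2

/-- `‖f‖₂²` with respect to `μ`. -/
def normSq (μ f : (∀ i, V i) → ℝ) : ℝ := ∑ x, μ x * (f x) ^ 2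

/-- `‖f‖₄⁴` with respect to `μ`. -/
def norm4p4 (μ f : (∀ i, V i) → ℝ) : ℝ := ∑ x, μ x * (f x) ^ 4

/-- `‖f‖₂` with respect to `μ`. -/
noncomputable def l2norm (μ f : (∀ i, V i) → ℝ) : ℝ := Real.sqrt (normSq μ f)

/-- `‖f‖_∞`: the maximum of `|f|` over the support of `μ`. -/
noncomputable def supNorm (μ f : (∀ i, V i) → ℝ) : ℝ :=
  sSup ((fun x => |f x|) '' {x | 0 < μ x})

/-- Inner product `⟨f, g⟩ = E_{x∼μ}[f(x) g(x)]`. -/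
def inner' (μ f g : (∀ i, V i) → ℝ) : ℝ := ∑ x, μ x * (f x * g x)

/-- The pair `{i,j}`-skeleton of `μ` is `ε`-pseudorandom. -/
def PairPseudo (μ : (∀ i, V i) → ℝ) (ε : ℝ) (i j : Fin k) : Prop :=
  ∀ (f₁ : V i → ℝ) (f₂ : V j → ℝ),
    |expect μ (fun x => f₁ (x i) * f₂ (x j)) -
        expect μ (fun x => f₁ (x i)) * expect μ (fun x => f₂ (x j))| ≤
      ε * Real.sqrt
        ((expect μ (fun x => f₁ (x i) ^ 2) - expect μ (fun x => f₁ (x i)) ^ 2) *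
          (expect μ (fun x => f₂ (x j) ^ 2) - expect μ (fun x => f₂ (x j)) ^ 2))

/-- `μ` is an `ε`-product measure: every link of every restriction of size `≤ k - 2`
has `ε`-pseudorandom skeletons. -/
def EpsProduct (μ : (∀ i, V i) → ℝ) (ε : ℝ) : Prop :=
  ∀ S : Finset (Fin k), S.card ≤ k - 2 → ∀ x, 0 < marg μ S x →
    ∀ i j : Fin k, i ∉ S → j ∉ S → i ≠ j → PairPseudo (cond μ S x) ε i j

/-- `‖f(x,·)‖_{L²(μ_x)}` for `x ∈ V_S`. -/
noncomputable def restrictNorm (μ : (∀ i, V i) → ℝ) (S : Finset (Fin k)) (x : ∀ i, V i)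
    (f : (∀ i, V i) → ℝ) : ℝ :=
  Real.sqrt (∑ z, cond μ S x z * (f z) ^ 2)

/-- `f` is `(d, δ)`-global: all restrictions of at most `d` coordinates have
`2`-norm at most `δ`. -/
def IsGlobal (μ : (∀ i, V i) → ℝ) (d : ℕ) (δ : ℝ) (f : (∀ i, V i) → ℝ) : Prop :=
  ∀ S : Finset (Fin k), S.card ≤ d → ∀ x, 0 < marg μ S x → restrictNorm μ S x f ≤ δ

/-- `f` is an `S`-junta: it depends only on the coordinates in `S`. -/
def Junta (S : Finset (Fin k)) (f : (∀ i, V i) → ℝ) : Prop :=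
  ∀ x y, (∀ i ∈ S, x i = y i) → f x = f y

/-- The noise operator `T_ρ f = ∑_{S ⊆ [k]} ρ^{|S|} (1-ρ)^{k-|S|} A_S f`. -/
noncomputable def noiseOp (μ : (∀ i, V i) → ℝ) (ρ : ℝ) (f : (∀ i, V i) → ℝ)
    (x : ∀ i, V i) : ℝ :=
  ∑ S ∈ (univ : Finset (Fin k)).powerset, ρ ^ S.card * (1 - ρ) ^ (k - S.card) * Aop μ S f x

/-- The up-down walk operator `T = (1/k) ∑_{i=1}^k A_{[k]∖{i}}`. -/
noncomputable def upDown (μ : (∀ i, V i) → ℝ) (f : (∀ i, V i) → ℝ) (x : ∀ i, V i) : ℝ :=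
  (1 / (k : ℝ)) * ∑ i : Fin k, Aop μ (univ.erase i) f x

/-- The product measure `μ₁ ⊗ ⋯ ⊗ μ_k`. -/
def prodMeasure (μi : ∀ i, V i → ℝ) : (∀ i, V i) → ℝ := fun x => ∏ i, μi i (x i)

/-- `f` has degree at most `d`: `f^{=S} = 0` whenever `|S| > d`. -/
def DegLe (μ : (∀ i, V i) → ℝ) (d : ℕ) (f : (∀ i, V i) → ℝ) : Prop :=
  ∀ S : Finset (Fin k), d < S.card → ∀ x, ES μ S f x = 0

/-- `{F S}_{S ⊆ [k]}` is an `(α, ε')`-approximate Efron–Stein decomposition of `f`. -/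
noncomputable def ApproxES (μ : (∀ i, V i) → ℝ) (α ε' : ℝ) (f : (∀ i, V i) → ℝ)
    (F : Finset (Fin k) → (∀ i, V i) → ℝ) : Prop :=
  l2norm μ f ≤ α ∧
    l2norm μ (fun x => f x - ∑ S ∈ (univ : Finset (Fin k)).powerset, F S x) ≤ ε' ∧
    ∀ S : Finset (Fin k), ∃ h : (∀ i, V i) → ℝ,
      l2norm μ h ≤ α ∧ l2norm μ (fun x => ES μ S h x - F S x) ≤ ε'


section Aux

variable {ν : (∀ i, V i) → ℝ}

lemma marg_def (S : Finset (Fin k)) (x : ∀ i, V i) :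
    marg ν S x = ∑ z, if ∀ i ∈ S, z i = x i then ν z else 0 := rfl

lemma cond_def (S : Finset (Fin k)) (x z : ∀ i, V i) :
    cond ν S x z = if ∀ i ∈ S, z i = x i then ν z / marg ν S x else 0 := rfl

lemma Aop_def (S : Finset (Fin k)) (f : (∀ i, V i) → ℝ) (x : ∀ i, V i) :
    Aop ν S f x = ∑ z, cond ν S x z * f z := rfl

lemma marg_nonneg (h0 : ∀ z, 0 ≤ ν z) (S : Finset (Fin k)) (x : ∀ i, V i) :
    0 ≤ marg ν S x :=
  Finset.sum_nonneg fun z _ => by split <;> simp [h0 z]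

lemma cond_nonneg (h0 : ∀ z, 0 ≤ ν z) (S : Finset (Fin k)) (x z : ∀ i, V i) :
    0 ≤ cond ν S x z := by
  rw [cond_def]; split
  · exact div_nonneg (h0 z) (marg_nonneg h0 S x)
  · exact le_refl 0

lemma marg_congr {S : Finset (Fin k)} {x y : ∀ i, V i} (h : ∀ i ∈ S, x i = y i) :
    marg ν S x = marg ν S y := by
  rw [marg_def, marg_def]
  refine Finset.sum_congr rfl fun z _ => ?_
  exact if_congr (forall₂_congr fun i hi => by rw [h i hi]) rfl rfl

lemma cond_congr {S : Finset (Fin k)} {x y : ∀ i, V i} (h : ∀ i ∈ S, x i = y i) :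
    cond ν S x = cond ν S y := by
  funext z
  rw [cond_def, cond_def, marg_congr h,
    if_congr (forall₂_congr fun i hi => by rw [h i hi]) rfl rfl]

lemma marg_mono (h0 : ∀ z, 0 ≤ ν z) {S T : Finset (Fin k)} (hST : S ⊆ T) (x : ∀ i, V i) :
    marg ν T x ≤ marg ν S x := by
  apply Finset.sum_le_sum; intro z _
  by_cases h : ∀ i ∈ T, z i = x i
  · rw [if_pos h, if_pos fun i hi => h i (hST hi)]
  · rw [if_neg h]; split <;> simp [h0 z]

lemma self_le_marg (h0 : ∀ z, 0 ≤ ν z) (S : Finset (Fin k)) (x : ∀ i, V i) :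
    ν x ≤ marg ν S x := by
  rw [marg_def]
  have := Finset.single_le_sum (f := fun z => if ∀ i ∈ S, z i = x i then ν z else 0)
    (fun z _ => by split <;> simp [h0 z]) (Finset.mem_univ x)
  simpa using this

lemma marg_eq_symm (S : Finset (Fin k)) (z : ∀ i, V i) :
    marg ν S z = ∑ x, if ∀ i ∈ S, z i = x i then ν x else 0 := by
  rw [marg_def]
  exact Finset.sum_congr rfl fun x _ => if_congr (forall₂_congr fun i hi => eq_comm) rfl rfl

lemma agree_of_cond_ne_zero {S : Finset (Fin k)} {x z : ∀ i, V i}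
    (h : cond ν S x z ≠ 0) : ∀ i ∈ S, z i = x i := by
  by_contra hc; exact h (by rw [cond_def, if_neg hc])

lemma ne_zero_of_cond_ne_zero {S : Finset (Fin k)} {x z : ∀ i, V i}
    (h : cond ν S x z ≠ 0) : ν z ≠ 0 := by
  intro h0; apply h; rw [cond_def]; split <;> simp [h0]

lemma sum_cond {S : Finset (Fin k)} {x : ∀ i, V i} (h : marg ν S x ≠ 0) :
    ∑ z, cond ν S x z = 1 := by
  have e : ∀ z : (∀ i, V i), cond ν S x z
      = (if ∀ i ∈ S, z i = x i then ν z else 0) / marg ν S x := by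
    intro z; rw [cond_def]; split <;> simp
  rw [Finset.sum_congr rfl fun z _ => e z, ← Finset.sum_div, ← marg_def]
  exact div_self h

lemma sum_cond_le_one (h0 : ∀ z, 0 ≤ ν z) (S : Finset (Fin k)) (x : ∀ i, V i) :
    ∑ z, cond ν S x z ≤ 1 := by
  by_cases hm : marg ν S x = 0
  · have : ∀ z : (∀ i, V i), cond ν S x z = 0 := fun z => by
      rw [cond_def, hm]; split <;> simp
    rw [Finset.sum_congr rfl fun z _ => this z]; simp
  · rw [sum_cond hm]

lemma sum_mul_cond (h0 : ∀ z, 0 ≤ ν z) (S : Finset (Fin k)) (z : ∀ i, V i) :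
    ∑ x, ν x * cond ν S x z = ν z := by
  have key : ∀ x, ν x * cond ν S x z
      = (ν z / marg ν S z) * (if ∀ i ∈ S, z i = x i then ν x else 0) := by
    intro x
    rw [cond_def]
    by_cases h : ∀ i ∈ S, z i = x i
    · rw [if_pos h, if_pos h, marg_congr (fun i hi => (h i hi).symm)]; ring
    · rw [if_neg h, if_neg h]; ring
  rw [Finset.sum_congr rfl fun x _ => key x, ← Finset.mul_sum, ← marg_eq_symm]
  by_cases hm : marg ν S z = 0
  · have : ν z = 0 := le_antisymm (hm ▸ self_le_marg h0 S z) (h0 z)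
    simp [this, hm]
  · field_simp

lemma expect_decomp (h0 : ∀ z, 0 ≤ ν z) (S : Finset (Fin k)) (F : (∀ i, V i) → ℝ) :
    ∑ x, ν x * (∑ z, cond ν S x z * F z) = ∑ z, ν z * F z := by
  have e : ∀ x : (∀ i, V i), ν x * (∑ z, cond ν S x z * F z)
      = ∑ z, ν x * cond ν S x z * F z := fun x => by
    rw [Finset.mul_sum]; exact Finset.sum_congr rfl fun z _ => (mul_assoc _ _ _).symm
  rw [Finset.sum_congr rfl fun x _ => e x, Finset.sum_comm]
  exact Finset.sum_congr rfl fun z _ => by rw [← Finset.sum_mul, sum_mul_cond h0]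

lemma normSq_decomp (h0 : ∀ z, 0 ≤ ν z) (S : Finset (Fin k)) (F : (∀ i, V i) → ℝ) :
    normSq ν F = ∑ x, ν x * normSq (cond ν S x) F :=
  (expect_decomp h0 S (fun z => F z ^ 2)).symm

lemma marg_cond {S T : Finset (Fin k)} {x z : ∀ i, V i} (h : ∀ i ∈ S, z i = x i) :
    marg (cond ν S x) T z = marg ν (S ∪ T) z / marg ν S x := by
  rw [marg_def, marg_def, Finset.sum_div]
  refine Finset.sum_congr rfl fun w _ => ?_
  by_cases hT : ∀ i ∈ T, w i = z i
  · rw [if_pos hT, cond_def]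
    by_cases hS : ∀ i ∈ S, w i = x i
    · rw [if_pos hS, if_pos]
      intro i hi
      rcases Finset.mem_union.1 hi with h1 | h1
      · rw [hS i h1]; exact (h i h1).symm
      · exact hT i h1
    · rw [if_neg hS, if_neg, zero_div]
      intro hc; apply hS; intro i hi
      rw [hc i (Finset.mem_union_left T hi), h i hi]
  · rw [if_neg hT, if_neg, zero_div]
    intro hc; apply hT; intro i hi; exact hc i (Finset.mem_union_right S hi)

lemma cond_cond (h0 : ∀ z, 0 ≤ ν z) {S T : Finset (Fin k)} {x z : ∀ i, V i}
    (h : ∀ i ∈ S, z i = x i) :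
    cond (cond ν S x) T z = cond ν (S ∪ T) z := by
  funext w
  by_cases hT : ∀ i ∈ T, w i = z i
  · by_cases hS : ∀ i ∈ S, w i = x i
    · have hST : ∀ i ∈ S ∪ T, w i = z i := by
        intro i hi
        rcases Finset.mem_union.1 hi with h1 | h1
        · rw [hS i h1]; exact (h i h1).symm
        · exact hT i h1
      have e1 : cond (cond ν S x) T z w
          = (ν w / marg ν S x) / (marg ν (S ∪ T) z / marg ν S x) := by
        rw [cond_def, if_pos hT, marg_cond h, cond_def, if_pos hS]
      rw [e1, cond_def, if_pos hST]
      by_cases hm : marg ν S x = 0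
      · have hm2 : marg ν (S ∪ T) z = 0 := by
          refine le_antisymm ?_ (marg_nonneg h0 _ _)
          calc marg ν (S ∪ T) z ≤ marg ν S z := marg_mono h0 Finset.subset_union_left z
            _ = marg ν S x := marg_congr h
            _ = 0 := hm
        rw [hm, hm2]; simp
      · by_cases hm2 : marg ν (S ∪ T) z = 0
        · rw [hm2]; simp
        · field_simp
    · have hST : ¬ ∀ i ∈ S ∪ T, w i = z i := fun hc => hS fun i hi => by
        rw [hc i (Finset.mem_union_left T hi)]; exact h i hi
      rw [cond_def (ν := cond ν S x) T z w, if_pos hT, cond_def S x w, if_neg hS,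
        zero_div, cond_def (S ∪ T) z w, if_neg hST]
  · have hST : ¬ ∀ i ∈ S ∪ T, w i = z i := by
      intro hc; apply hT; intro i hi; exact hc i (Finset.mem_union_right S hi)
    rw [cond_def, if_neg hT, cond_def, if_neg hST]

lemma Aop_cond (h0 : ∀ z, 0 ≤ ν z) {S : Finset (Fin k)} {x z : ∀ i, V i}
    (h : ∀ i ∈ S, z i = x i) (T : Finset (Fin k)) (f : (∀ i, V i) → ℝ) :
    Aop (cond ν S x) T f z = Aop ν (S ∪ T) f z := by
  rw [Aop_def, Aop_def, cond_cond h0 h]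

lemma chapman (h0 : ∀ z, 0 ≤ ν z) {S T : Finset (Fin k)} (hST : S ⊆ T)
    (x w : ∀ i, V i) :
    ∑ z, cond ν S x z * cond ν T z w = cond ν S x w := by
  by_cases hw : ν w = 0
  · have e : ∀ z : (∀ i, V i), cond ν T z w = 0 := fun z => by
      rw [cond_def]; split <;> simp [hw]
    have e2 : cond ν S x w = 0 := by rw [cond_def]; split <;> simp [hw]
    rw [e2]; exact Finset.sum_eq_zero fun z _ => by rw [e z, mul_zero]
  · have hmw : marg ν T w ≠ 0 := fun hc =>
      hw (le_antisymm (hc ▸ self_le_marg h0 T w) (h0 w))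
    have key : ∀ z, cond ν S x z * cond ν T z w
        = (if ∀ i ∈ T, w i = z i then ν z else 0) *
          ((if ∀ i ∈ S, w i = x i then (1:ℝ) else 0) * ν w / (marg ν S x * marg ν T w)) := by
      intro z
      by_cases hT : ∀ i ∈ T, w i = z i
      · have hmz : marg ν T z = marg ν T w := marg_congr fun i hi => (hT i hi).symm
        have hcond : (∀ i ∈ S, z i = x i) ↔ (∀ i ∈ S, w i = x i) := by
          constructor <;> intro hh i hi
          · rw [hT i (hST hi)]; exact hh i hi
          · rw [← hT i (hST hi)]; exact hh i hi
        rw [cond_def, cond_def, if_pos hT, hmz, if_pos hT]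
        by_cases hS : ∀ i ∈ S, z i = x i
        · rw [if_pos hS, if_pos (hcond.1 hS)]
          rw [div_mul_div_comm, one_mul, mul_div_assoc]
        · rw [if_neg hS, if_neg (fun hh => hS (hcond.2 hh))]
          simp
      · rw [cond_def T z w, if_neg hT, mul_zero, if_neg hT, zero_mul]
    rw [Finset.sum_congr rfl fun z _ => key z, ← Finset.sum_mul, ← marg_eq_symm]
    by_cases hS : ∀ i ∈ S, w i = x i
    · rw [if_pos hS, cond_def, if_pos hS, one_mul,
        mul_comm (marg ν S x) (marg ν T w), mul_div_assoc', mul_div_mul_left _ _ hmw]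
    · rw [if_neg hS, cond_def, if_neg hS]
      simp

lemma tower (h0 : ∀ z, 0 ≤ ν z) {S T : Finset (Fin k)} (hST : S ⊆ T)
    (f : (∀ i, V i) → ℝ) (x : ∀ i, V i) :
    Aop ν S (Aop ν T f) x = Aop ν S f x := by
  rw [Aop_def, Aop_def]
  calc ∑ z, cond ν S x z * Aop ν T f z
      = ∑ z, ∑ w, cond ν S x z * cond ν T z w * f w := by
        refine Finset.sum_congr rfl fun z _ => ?_
        rw [Aop_def, Finset.mul_sum]
        exact Finset.sum_congr rfl fun w _ => (mul_assoc _ _ _).symm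
    _ = ∑ w, (∑ z, cond ν S x z * cond ν T z w) * f w := by
        rw [Finset.sum_comm]
        exact Finset.sum_congr rfl fun w _ => (Finset.sum_mul _ _ _).symm
    _ = ∑ w, cond ν S x w * f w := by
        refine Finset.sum_congr rfl fun w _ => ?_
        rw [chapman h0 hST]

lemma Junta_Aop (S : Finset (Fin k)) (f : (∀ i, V i) → ℝ) : Junta S (Aop ν S f) := by
  intro x y h
  rw [Aop_def, Aop_def, cond_congr h]

lemma Aop_sub (S : Finset (Fin k)) (f g : (∀ i, V i) → ℝ) (x : ∀ i, V i) :
    Aop ν S (fun z => f z - g z) x = Aop ν S f x - Aop ν S g x := by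
  rw [Aop_def, Aop_def, Aop_def, ← Finset.sum_sub_distrib]
  exact Finset.sum_congr rfl fun z _ => by ring

lemma Aop_congr_support {f g : (∀ i, V i) → ℝ} (h : ∀ w, ν w ≠ 0 → f w = g w)
    (S : Finset (Fin k)) (x : ∀ i, V i) : Aop ν S f x = Aop ν S g x := by
  rw [Aop_def, Aop_def]
  refine Finset.sum_congr rfl fun w _ => ?_
  by_cases hw : cond ν S x w = 0
  · rw [hw, zero_mul, zero_mul]
  · rw [h w (ne_zero_of_cond_ne_zero hw)]

lemma normSq_congr_support {f g : (∀ i, V i) → ℝ} (h : ∀ w, ν w ≠ 0 → f w = g w) :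
    normSq ν f = normSq ν g := by
  refine Finset.sum_congr rfl fun w _ => ?_
  by_cases hw : ν w = 0
  · rw [hw, zero_mul, zero_mul]
  · rw [h w hw]

lemma expect_congr_support {f g : (∀ i, V i) → ℝ} (h : ∀ w, ν w ≠ 0 → f w = g w) :
    expect ν f = expect ν g := by
  refine Finset.sum_congr rfl fun w _ => ?_
  by_cases hw : ν w = 0
  · rw [hw, zero_mul, zero_mul]
  · rw [h w hw]

lemma marg_empty (x : ∀ i, V i) : marg ν ∅ x = ∑ z, ν z := by
  rw [marg_def]
  exact Finset.sum_congr rfl fun z _ => if_pos (by simp)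

lemma Aop_empty (h1 : ∑ z, ν z = 1) (f : (∀ i, V i) → ℝ) (x : ∀ i, V i) :
    Aop ν ∅ f x = expect ν f := by
  rw [Aop_def]
  refine Finset.sum_congr rfl fun z _ => ?_
  rw [cond_def, if_pos (by simp), marg_empty, h1, div_one]

lemma sq_expect_le (h0 : ∀ z, 0 ≤ ν z) (hs : ∑ z, ν z ≤ 1) (f : (∀ i, V i) → ℝ) :
    (∑ z, ν z * f z) ^ 2 ≤ ∑ z, ν z * f z ^ 2 := by
  have h := Finset.sum_mul_sq_le_sq_mul_sq Finset.univ (fun z => Real.sqrt (ν z))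
    (fun z => Real.sqrt (ν z) * f z)
  have e1 : ∀ z : (∀ i, V i), Real.sqrt (ν z) * (Real.sqrt (ν z) * f z) = ν z * f z :=
    fun z => by rw [← mul_assoc, Real.mul_self_sqrt (h0 z)]
  have e2 : ∀ z : (∀ i, V i), Real.sqrt (ν z) ^ 2 = ν z := fun z => Real.sq_sqrt (h0 z)
  have e3 : ∀ z : (∀ i, V i), (Real.sqrt (ν z) * f z) ^ 2 = ν z * f z ^ 2 := fun z => by
    rw [mul_pow, e2]
  calc (∑ z, ν z * f z) ^ 2
      = (∑ z, Real.sqrt (ν z) * (Real.sqrt (ν z) * f z)) ^ 2 := by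
        rw [Finset.sum_congr rfl fun z _ => e1 z]
    _ ≤ (∑ z, Real.sqrt (ν z) ^ 2) * ∑ z, (Real.sqrt (ν z) * f z) ^ 2 := h
    _ = (∑ z, ν z) * ∑ z, ν z * f z ^ 2 := by
        rw [Finset.sum_congr rfl fun z _ => e2 z, Finset.sum_congr rfl fun z _ => e3 z]
    _ ≤ 1 * ∑ z, ν z * f z ^ 2 := by
        refine mul_le_mul_of_nonneg_right hs ?_
        exact Finset.sum_nonneg fun z _ => mul_nonneg (h0 z) (sq_nonneg _)
    _ = _ := one_mul _

lemma normSq_Aop_le (h0 : ∀ z, 0 ≤ ν z) (S : Finset (Fin k)) (f : (∀ i, V i) → ℝ) :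
    normSq ν (Aop ν S f) ≤ normSq ν f := by
  have key : ∀ x, (Aop ν S f x) ^ 2 ≤ ∑ z, cond ν S x z * f z ^ 2 := fun x =>
    sq_expect_le (fun z => cond_nonneg h0 S x z) (sum_cond_le_one h0 S x) f
  calc normSq ν (Aop ν S f) ≤ ∑ x, ν x * ∑ z, cond ν S x z * f z ^ 2 :=
      Finset.sum_le_sum fun x _ => mul_le_mul_of_nonneg_left (key x) (h0 x)
    _ = normSq ν f := expect_decomp h0 S (fun z => f z ^ 2)

lemma normSq_nonneg' (h0 : ∀ z, 0 ≤ ν z) (f : (∀ i, V i) → ℝ) : 0 ≤ normSq ν f :=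
  Finset.sum_nonneg fun z _ => mul_nonneg (h0 z) (sq_nonneg _)

lemma l2norm_nonneg (f : (∀ i, V i) → ℝ) : 0 ≤ l2norm ν f := Real.sqrt_nonneg _

lemma l2norm_sq (h0 : ∀ z, 0 ≤ ν z) (f : (∀ i, V i) → ℝ) :
    (l2norm ν f) ^ 2 = normSq ν f := Real.sq_sqrt (normSq_nonneg' h0 f)

lemma l2_le_of_normSq_le {c : ℝ} (hc : 0 ≤ c) {f g : (∀ i, V i) → ℝ}
    (h : normSq ν f ≤ c ^ 2 * normSq ν g) : l2norm ν f ≤ c * l2norm ν g := by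
  unfold l2norm
  rw [show c * Real.sqrt (normSq ν g) = Real.sqrt (c ^ 2 * normSq ν g) by
    rw [Real.sqrt_mul (sq_nonneg c), Real.sqrt_sq hc]]
  exact Real.sqrt_le_sqrt h

lemma normSq_le_of_l2 (h0 : ∀ z, 0 ≤ ν z) {c : ℝ} {f g : (∀ i, V i) → ℝ} (hc : 0 ≤ c)
    (h : l2norm ν f ≤ c * l2norm ν g) : normSq ν f ≤ c ^ 2 * normSq ν g := by
  have h2 := pow_le_pow_left₀ (l2norm_nonneg f) h 2
  rw [l2norm_sq h0, mul_pow, l2norm_sq h0] at h2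
  exact h2

lemma l2norm_Aop_le (h0 : ∀ z, 0 ≤ ν z) (S : Finset (Fin k)) (f : (∀ i, V i) → ℝ) :
    l2norm ν (Aop ν S f) ≤ l2norm ν f :=
  Real.sqrt_le_sqrt (normSq_Aop_le h0 S f)

lemma inner_le_l2 (h0 : ∀ z, 0 ≤ ν z) (f g : (∀ i, V i) → ℝ) :
    ∑ z, ν z * (f z * g z) ≤ l2norm ν f * l2norm ν g := by
  have h := Real.sum_mul_le_sqrt_mul_sqrt Finset.univ (fun z => Real.sqrt (ν z) * f z)
    (fun z => Real.sqrt (ν z) * g z)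
  have e1 : ∀ z : (∀ i, V i), (Real.sqrt (ν z) * f z) * (Real.sqrt (ν z) * g z)
      = ν z * (f z * g z) := fun z => by
    rw [show (Real.sqrt (ν z) * f z) * (Real.sqrt (ν z) * g z)
        = Real.sqrt (ν z) * Real.sqrt (ν z) * (f z * g z) by ring,
      Real.mul_self_sqrt (h0 z)]
  have e2 : ∀ (u : (∀ i, V i) → ℝ), (∑ z, (Real.sqrt (ν z) * u z) ^ 2) = normSq ν u := by
    intro u
    exact Finset.sum_congr rfl fun z _ => by rw [mul_pow, Real.sq_sqrt (h0 z)]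
  rw [Finset.sum_congr rfl fun z _ => e1 z, e2 f, e2 g] at h
  exact h

lemma l2norm_triangle (h0 : ∀ z, 0 ≤ ν z) (f g : (∀ i, V i) → ℝ) :
    l2norm ν (fun z => f z + g z) ≤ l2norm ν f + l2norm ν g := by
  have h1 : normSq ν (fun z => f z + g z) ≤ (l2norm ν f + l2norm ν g) ^ 2 := by
    have e : normSq ν (fun z => f z + g z)
        = normSq ν f + 2 * (∑ z, ν z * (f z * g z)) + normSq ν g := by
      unfold normSq
      rw [Finset.mul_sum]
      rw [← Finset.sum_add_distrib, ← Finset.sum_add_distrib]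
      exact Finset.sum_congr rfl fun z _ => by ring
    have h2 := inner_le_l2 h0 f g
    have h3 := l2norm_sq h0 f
    have h4 := l2norm_sq h0 g
    nlinarith [l2norm_nonneg (ν := ν) f, l2norm_nonneg (ν := ν) g]
  calc l2norm ν (fun z => f z + g z) ≤ Real.sqrt ((l2norm ν f + l2norm ν g) ^ 2) :=
      Real.sqrt_le_sqrt h1
    _ = _ := Real.sqrt_sq (add_nonneg (l2norm_nonneg f) (l2norm_nonneg g))

end Aux


section Core

variable {ν : (∀ i, V i) → ℝ} {ε : ℝ}

lemma expect_def (f : (∀ i, V i) → ℝ) : expect ν f = ∑ x, ν x * f x := rfl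

lemma normSq_def (f : (∀ i, V i) → ℝ) : normSq ν f = ∑ x, ν x * f x ^ 2 := rfl

lemma l2norm_def (f : (∀ i, V i) → ℝ) : l2norm ν f = Real.sqrt (normSq ν f) := rfl

lemma var_nonneg (h0 : ∀ z, 0 ≤ ν z) (h1 : ∑ z, ν z = 1) (f : (∀ i, V i) → ℝ) :
    (expect ν f) ^ 2 ≤ normSq ν f :=
  sq_expect_le h0 (le_of_eq h1) f

/-- All links of `ν` (with no size restriction) are `ε`-pseudorandom. -/
def PP (ν : (∀ i, V i) → ℝ) (ε : ℝ) : Prop :=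
  ∀ (Q : Finset (Fin k)) (x : ∀ i, V i), 0 < marg ν Q x →
    ∀ i j : Fin k, i ∉ Q → j ∉ Q → i ≠ j → PairPseudo (cond ν Q x) ε i j

lemma exists_of_marg_pos (h0 : ∀ z, 0 ≤ ν z) {Q : Finset (Fin k)} {x : ∀ i, V i}
    (h : 0 < marg ν Q x) : ∃ z, (∀ i ∈ Q, z i = x i) ∧ ν z ≠ 0 := by
  by_contra hc
  push_neg at hc
  have hm : marg ν Q x = 0 := by
    rw [marg_def]
    refine Finset.sum_eq_zero fun z _ => ?_
    by_cases hz : ∀ i ∈ Q, z i = x i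
    · rw [if_pos hz, hc z hz]
    · rw [if_neg hz]
  rw [hm] at h; exact lt_irrefl 0 h

lemma pairPseudo_of_detL {ν' : (∀ i, V i) → ℝ} (h0 : ∀ z, 0 ≤ ν' z)
    (h1 : ∑ z, ν' z = 1) {i j : Fin k} (z : ∀ i, V i)
    (hdet : ∀ w, ν' w ≠ 0 → w i = z i) (ε : ℝ) :
    PairPseudo ν' ε i j := by
  intro f₁ f₂
  have key : ∀ (u : (∀ i, V i) → ℝ), expect ν' (fun x => f₁ (x i) * u x)
      = f₁ (z i) * expect ν' u := by
    intro u
    rw [expect_def, expect_def, Finset.mul_sum]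
    refine Finset.sum_congr rfl fun w _ => ?_
    by_cases hw : ν' w = 0
    · rw [hw]; ring
    · rw [hdet w hw]; ring
  have eone : expect ν' (fun _ => (1:ℝ)) = 1 := by rw [expect_def]; simp [h1]
  have e2 : expect ν' (fun x => f₁ (x i)) = f₁ (z i) := by
    have h := key (fun _ => 1)
    simp only [mul_one] at h
    rw [h, eone, mul_one]
  have e1 : expect ν' (fun x => f₁ (x i) * f₂ (x j))
      = f₁ (z i) * expect ν' (fun x => f₂ (x j)) := key _
  have e3 : expect ν' (fun x => f₁ (x i) ^ 2) = f₁ (z i) ^ 2 := by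
    have h := key (fun x => f₁ (x i))
    have e : (fun x : (∀ t, V t) => f₁ (x i) ^ 2) = (fun x => f₁ (x i) * f₁ (x i)) :=
      funext fun x => pow_two (f₁ (x i))
    rw [e, h, e2, pow_two]
  rw [e1, e2, e3, sub_self, abs_zero, sub_self, zero_mul, Real.sqrt_zero, mul_zero]

lemma pairPseudo_of_detR {ν' : (∀ i, V i) → ℝ} (h0 : ∀ z, 0 ≤ ν' z)
    (h1 : ∑ z, ν' z = 1) {i j : Fin k} (z : ∀ i, V i)
    (hdet : ∀ w, ν' w ≠ 0 → w j = z j) (ε : ℝ) :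
    PairPseudo ν' ε i j := by
  intro f₁ f₂
  have key : ∀ (u : (∀ i, V i) → ℝ), expect ν' (fun x => u x * f₂ (x j))
      = expect ν' u * f₂ (z j) := by
    intro u
    rw [expect_def, expect_def, Finset.sum_mul]
    refine Finset.sum_congr rfl fun w _ => ?_
    by_cases hw : ν' w = 0
    · rw [hw]; ring
    · rw [hdet w hw]; ring
  have eone : expect ν' (fun _ => (1:ℝ)) = 1 := by rw [expect_def]; simp [h1]
  have e2 : expect ν' (fun x => f₂ (x j)) = f₂ (z j) := by
    have h := key (fun _ => 1)
    simp only [one_mul] at h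
    rw [h, eone, one_mul]
  have e1 : expect ν' (fun x => f₁ (x i) * f₂ (x j))
      = expect ν' (fun x => f₁ (x i)) * f₂ (z j) := key _
  have e3 : expect ν' (fun x => f₂ (x j) ^ 2) = f₂ (z j) ^ 2 := by
    have h := key (fun x => f₂ (x j))
    have e : (fun x : (∀ t, V t) => f₂ (x j) ^ 2) = (fun x => f₂ (x j) * f₂ (x j)) :=
      funext fun x => pow_two (f₂ (x j))
    rw [e, h, e2, pow_two]
  rw [e1, e2, e3, sub_self, abs_zero, sub_self, mul_zero, Real.sqrt_zero, mul_zero]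

lemma PP_cond (h0 : ∀ z, 0 ≤ ν z) (hpp : PP ν ε) (S : Finset (Fin k)) (x : ∀ i, V i) :
    PP (cond ν S x) ε := by
  intro Q x' hm i j hiQ hjQ hij
  obtain ⟨z, hz1, hz2⟩ := exists_of_marg_pos (cond_nonneg h0 S x) hm
  have hzS : ∀ t ∈ S, z t = x t := agree_of_cond_ne_zero hz2
  have hνz : ν z ≠ 0 := ne_zero_of_cond_ne_zero hz2
  have e : cond (cond ν S x) Q x' = cond ν (S ∪ Q) z := by
    rw [cond_congr (fun t ht => (hz1 t ht).symm), cond_cond h0 hzS]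
  rw [e]
  have hmne : marg ν (S ∪ Q) z ≠ 0 := fun hc =>
    hνz (le_antisymm (hc ▸ self_le_marg h0 _ z) (h0 z))
  have h0' : ∀ w, 0 ≤ cond ν (S ∪ Q) z w := cond_nonneg h0 _ _
  have h1' : ∑ w, cond ν (S ∪ Q) z w = 1 := sum_cond hmne
  by_cases hiS : i ∈ S
  · exact pairPseudo_of_detL h0' h1' z
      (fun w hw => agree_of_cond_ne_zero hw i (Finset.mem_union_left Q hiS)) ε
  · by_cases hjS : j ∈ S
    · exact pairPseudo_of_detR h0' h1' z
        (fun w hw => agree_of_cond_ne_zero hw j (Finset.mem_union_left Q hjS)) ε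
    · exact hpp (S ∪ Q) z (lt_of_le_of_ne (marg_nonneg h0 _ _) (Ne.symm hmne)) i j
        (fun hc => (Finset.mem_union.1 hc).elim hiS hiQ)
        (fun hc => (Finset.mem_union.1 hc).elim hjS hjQ) hij

lemma PP_of_epsProduct {μ : (∀ i, V i) → ℝ} (hprod : EpsProduct μ ε) : PP μ ε := by
  intro Q x hm i j hiQ hjQ hij
  refine hprod Q ?_ x hm i j hiQ hjQ hij
  have hsub : Q ⊆ Finset.univ \ {i, j} := by
    intro a ha
    rw [Finset.mem_sdiff]
    refine ⟨Finset.mem_univ a, fun hc => ?_⟩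
    rcases Finset.mem_insert.1 hc with h1 | h1
    · exact hiQ (h1 ▸ ha)
    · exact hjQ ((Finset.mem_singleton.1 h1) ▸ ha)
  calc Q.card ≤ (Finset.univ \ ({i, j} : Finset (Fin k))).card := Finset.card_le_card hsub
    _ = k - 2 := by
      rw [Finset.card_sdiff_of_subset (Finset.subset_univ _), Finset.card_univ, Fintype.card_fin,
        Finset.card_insert_of_notMem (by simp [hij]), Finset.card_singleton]

lemma lemA (h0 : ∀ z, 0 ≤ ν z) (h1 : ∑ z, ν z = 1) (hε : 0 ≤ ε)
    {i j : Fin k} (hps : PairPseudo ν ε i j)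
    {g : (∀ i, V i) → ℝ} (hg : Junta {i} g) :
    normSq ν (fun x => Aop ν {j} g x - expect ν g) ≤ ε ^ 2 * normSq ν g := by
  have hne : Nonempty (∀ i, V i) := by
    by_contra hh
    rw [not_nonempty_iff] at hh
    rw [@Finset.univ_eq_empty _ _ hh, Finset.sum_empty] at h1
    exact one_ne_zero h1.symm
  obtain ⟨x₀⟩ := hne
  set h : (∀ i, V i) → ℝ := fun x => Aop ν ({j} : Finset (Fin k)) g x - expect ν g
    with hdef
  have hjh : Junta {j} h := by
    intro x y hxy
    simp only [hdef]
    rw [Junta_Aop ({j} : Finset (Fin k)) g x y hxy]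
  set g₁ : V i → ℝ := fun a => g (Function.update x₀ i a) with hg1
  set h₁ : V j → ℝ := fun a => h (Function.update x₀ j a) with hh1
  have hgx : ∀ x : (∀ i, V i), g₁ (x i) = g x := fun x =>
    (hg x _ (fun t ht => by
      rw [Finset.mem_singleton] at ht; subst ht; rw [Function.update_self])).symm
  have hhx : ∀ x : (∀ i, V i), h₁ (x j) = h x := fun x =>
    (hjh x _ (fun t ht => by
      rw [Finset.mem_singleton] at ht; subst ht; rw [Function.update_self])).symm
  have step1 : ∑ x, ν x * (Aop ν ({j} : Finset (Fin k)) g x * h x)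
      = ∑ x, ν x * (g x * h x) := by
    have e : ∀ x, Aop ν ({j} : Finset (Fin k)) g x * h x
        = ∑ z, cond ν {j} x z * (g z * h z) := by
      intro x
      rw [Aop_def, Finset.sum_mul]
      refine Finset.sum_congr rfl fun z _ => ?_
      by_cases hc : cond ν ({j} : Finset (Fin k)) x z = 0
      · rw [hc]; ring
      · rw [show h x = h z from (hjh z x (agree_of_cond_ne_zero hc)).symm, mul_assoc]
    rw [Finset.sum_congr rfl fun x _ => by rw [e x],
      expect_decomp h0 {j} (fun z => g z * h z)]
  have eN : normSq ν h = (∑ x, ν x * (g x * h x)) - expect ν g * expect ν h := by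
    rw [← step1, normSq_def, expect_def h, Finset.mul_sum, ← Finset.sum_sub_distrib]
    refine Finset.sum_congr rfl fun x _ => ?_
    simp only [hdef]
    ring
  have hp := hps g₁ h₁
  have e1 : expect ν (fun x => g₁ (x i) * h₁ (x j)) = ∑ x, ν x * (g x * h x) := by
    rw [expect_def]
    exact Finset.sum_congr rfl fun x _ => by rw [hgx x, hhx x]
  have e2 : expect ν (fun x => g₁ (x i)) = expect ν g := by
    rw [expect_def, expect_def]
    exact Finset.sum_congr rfl fun x _ => by rw [hgx x]
  have e3 : expect ν (fun x => h₁ (x j)) = expect ν h := by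
    rw [expect_def, expect_def]
    exact Finset.sum_congr rfl fun x _ => by rw [hhx x]
  have e4 : expect ν (fun x => g₁ (x i) ^ 2) = normSq ν g := by
    rw [expect_def, normSq_def]
    exact Finset.sum_congr rfl fun x _ => by rw [hgx x]
  have e5 : expect ν (fun x => h₁ (x j) ^ 2) = normSq ν h := by
    rw [expect_def, normSq_def]
    exact Finset.sum_congr rfl fun x _ => by rw [hhx x]
  rw [e1, e2, e3, e4, e5] at hp
  have hVg0 : 0 ≤ normSq ν g - (expect ν g) ^ 2 := sub_nonneg.2 (var_nonneg h0 h1 g)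
  have hVh0 : 0 ≤ normSq ν h - (expect ν h) ^ 2 := sub_nonneg.2 (var_nonneg h0 h1 h)
  have hVg1 : normSq ν g - (expect ν g) ^ 2 ≤ normSq ν g := by
    nlinarith [sq_nonneg (expect ν g)]
  have hVh1 : normSq ν h - (expect ν h) ^ 2 ≤ normSq ν h := by
    nlinarith [sq_nonneg (expect ν h)]
  have hsqrt : Real.sqrt ((normSq ν g - (expect ν g) ^ 2) * (normSq ν h - (expect ν h) ^ 2))
      ≤ Real.sqrt (normSq ν g) * Real.sqrt (normSq ν h) := by
    rw [← Real.sqrt_mul (normSq_nonneg' h0 g)]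
    exact Real.sqrt_le_sqrt (mul_le_mul hVg1 hVh1 hVh0 (normSq_nonneg' h0 g))
  have hfin : normSq ν h ≤ ε * (Real.sqrt (normSq ν g) * Real.sqrt (normSq ν h)) := by
    calc normSq ν h = (∑ x, ν x * (g x * h x)) - expect ν g * expect ν h := eN
      _ ≤ |(∑ x, ν x * (g x * h x)) - expect ν g * expect ν h| := le_abs_self _
      _ ≤ ε * Real.sqrt ((normSq ν g - (expect ν g) ^ 2) * (normSq ν h - (expect ν h) ^ 2)) := hp
      _ ≤ ε * (Real.sqrt (normSq ν g) * Real.sqrt (normSq ν h)) :=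
          mul_le_mul_of_nonneg_left hsqrt hε
  have hN0 : 0 ≤ normSq ν h := normSq_nonneg' h0 h
  have hG0 : 0 ≤ normSq ν g := normSq_nonneg' h0 g
  nlinarith [Real.sq_sqrt hN0, Real.sq_sqrt hG0, Real.sqrt_nonneg (normSq ν h),
    Real.sqrt_nonneg (normSq ν g),
    sq_nonneg (ε * Real.sqrt (normSq ν g) - Real.sqrt (normSq ν h))]

end Core


section Induct

variable {ν : (∀ i, V i) → ℝ} {ε : ℝ}

lemma lemB (h0 : ∀ z, 0 ≤ ν z) (hpp : PP ν ε) (hε : 0 ≤ ε)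
    {i j : Fin k} (hij : i ≠ j) {Q : Finset (Fin k)} (hiQ : i ∉ Q) (hjQ : j ∉ Q)
    {g : (∀ i, V i) → ℝ} (hg : Junta {i} g) :
    normSq ν (fun x => Aop ν (insert j Q) g x - Aop ν Q g x) ≤ ε ^ 2 * normSq ν g := by
  rw [normSq_decomp h0 Q, normSq_decomp h0 Q (ν := ν) g, Finset.mul_sum]
  refine Finset.sum_le_sum fun x _ => ?_
  by_cases hx : ν x = 0
  · simp [hx]
  · have hmQ : marg ν Q x ≠ 0 := fun hc =>
      hx (le_antisymm (hc ▸ self_le_marg h0 Q x) (h0 x))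
    have h0' : ∀ w, 0 ≤ cond ν Q x w := cond_nonneg h0 Q x
    have h1' : ∑ w, cond ν Q x w = 1 := sum_cond hmQ
    have hps : PairPseudo (cond ν Q x) ε i j :=
      hpp Q x (lt_of_le_of_ne (marg_nonneg h0 _ _) (Ne.symm hmQ)) i j hiQ hjQ hij
    have e : normSq (cond ν Q x) (fun z => Aop ν (insert j Q) g z - Aop ν Q g z)
        = normSq (cond ν Q x)
            (fun z => Aop (cond ν Q x) {j} g z - expect (cond ν Q x) g) := by
      apply normSq_congr_support
      intro z hz
      have hzQ : ∀ t ∈ Q, z t = x t := agree_of_cond_ne_zero hz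
      have a1 : Aop ν (insert j Q) g z = Aop (cond ν Q x) {j} g z := by
        rw [Aop_cond h0 hzQ {j} g, Finset.union_comm, ← Finset.insert_eq]
      have a2 : Aop ν Q g z = expect (cond ν Q x) g := by
        rw [Junta_Aop Q g z x hzQ]; rfl
      rw [a1, a2]
    rw [e]
    have hA := lemA h0' h1' hε hps hg
    calc ν x * normSq (cond ν Q x)
          (fun z => Aop (cond ν Q x) {j} g z - expect (cond ν Q x) g)
        ≤ ν x * (ε ^ 2 * normSq (cond ν Q x) g) :=
          mul_le_mul_of_nonneg_left hA (h0 x)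
      _ = ε ^ 2 * (ν x * normSq (cond ν Q x) g) := by ring

lemma lemC (h0 : ∀ z, 0 ≤ ν z) (h1 : ∑ z, ν z = 1) (hpp : PP ν ε) (hε : 0 ≤ ε)
    {i : Fin k} {g : (∀ i, V i) → ℝ} (hg : Junta {i} g) (T : Finset (Fin k)) :
    i ∉ T → l2norm ν (fun x => Aop ν T g x - expect ν g) ≤ T.card * ε * l2norm ν g := by
  induction T using Finset.induction_on with
  | empty =>
    intro _
    have e : (fun x => Aop ν ∅ g x - expect ν g) = (fun _ : (∀ i, V i) => (0:ℝ)) :=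
      funext fun x => by rw [Aop_empty h1, sub_self]
    rw [e]
    have e2 : normSq ν (fun _ : (∀ i, V i) => (0:ℝ)) = 0 := by
      rw [normSq_def]; simp
    rw [l2norm_def, e2, Real.sqrt_zero]
    exact mul_nonneg (mul_nonneg (by positivity) hε) (l2norm_nonneg g)
  | @insert j T' hj ih =>
    intro hiT
    have hij : i ≠ j := fun e => hiT (e ▸ Finset.mem_insert_self j T')
    have hiT' : i ∉ T' := fun hc => hiT (Finset.mem_insert_of_mem hc)
    have edec : (fun x => Aop ν (insert j T') g x - expect ν g)
        = (fun x => (Aop ν (insert j T') g x - Aop ν T' g x)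
            + (Aop ν T' g x - expect ν g)) := funext fun x => by ring
    rw [edec]
    refine le_trans (l2norm_triangle h0 _ _) ?_
    have b1 : l2norm ν (fun x => Aop ν (insert j T') g x - Aop ν T' g x)
        ≤ ε * l2norm ν g :=
      l2_le_of_normSq_le hε (lemB h0 hpp hε hij hiT' hj hg)
    have b2 := ih hiT'
    calc l2norm ν (fun x => Aop ν (insert j T') g x - Aop ν T' g x)
          + l2norm ν (fun x => Aop ν T' g x - expect ν g)
        ≤ ε * l2norm ν g + T'.card * ε * l2norm ν g := add_le_add b1 b2
      _ = (insert j T').card * ε * l2norm ν g := by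
          rw [Finset.card_insert_of_notMem hj]; push_cast; ring

lemma lemD (h0 : ∀ z, 0 ≤ ν z) (hpp : PP ν ε) (hε : 0 ≤ ε)
    {i : Fin k} {S' T : Finset (Fin k)} (hiS : i ∉ S') (hiT : i ∉ T)
    {g : (∀ i, V i) → ℝ} (hg : Junta (insert i S') g) :
    normSq ν (fun z => Aop ν (T ∪ S') g z - Aop ν S' g z)
      ≤ ((T.card : ℝ) * ε) ^ 2 * normSq ν g := by
  rw [normSq_decomp h0 S', normSq_decomp h0 S' (ν := ν) g, Finset.mul_sum]
  refine Finset.sum_le_sum fun x _ => ?_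
  by_cases hx : ν x = 0
  · simp [hx]
  · have hmS : marg ν S' x ≠ 0 := fun hc =>
      hx (le_antisymm (hc ▸ self_le_marg h0 S' x) (h0 x))
    have h0' : ∀ w, 0 ≤ cond ν S' x w := cond_nonneg h0 S' x
    have h1' : ∑ w, cond ν S' x w = 1 := sum_cond hmS
    have hpp' : PP (cond ν S' x) ε := PP_cond h0 hpp S' x
    set g' : (∀ i, V i) → ℝ := fun z => g (fun t => if t ∈ S' then x t else z t)
      with hg'
    have hg'j : Junta {i} g' := by
      intro z w hzw
      simp only [hg']
      apply hg
      intro t ht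
      rcases Finset.mem_insert.1 ht with h1 | h1
      · subst h1
        rw [if_neg hiS, if_neg hiS]
        exact hzw t (Finset.mem_singleton_self t)
      · rw [if_pos h1, if_pos h1]
    have hsupp : ∀ w, cond ν S' x w ≠ 0 → g' w = g w := by
      intro w hw
      have hwS : ∀ t ∈ S', w t = x t := agree_of_cond_ne_zero hw
      simp only [hg']
      apply hg
      intro t ht
      by_cases htS : t ∈ S'
      · rw [if_pos htS, hwS t htS]
      · rw [if_neg htS]
    have e : normSq (cond ν S' x) (fun z => Aop ν (T ∪ S') g z - Aop ν S' g z)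
        = normSq (cond ν S' x)
            (fun z => Aop (cond ν S' x) T g' z - expect (cond ν S' x) g') := by
      apply normSq_congr_support
      intro z hz
      have hzS : ∀ t ∈ S', z t = x t := agree_of_cond_ne_zero hz
      have a1 : Aop ν (T ∪ S') g z = Aop (cond ν S' x) T g z := by
        rw [Aop_cond h0 hzS T g, Finset.union_comm]
      have a2 : Aop (cond ν S' x) T g z = Aop (cond ν S' x) T g' z :=
        Aop_congr_support (fun w hw => (hsupp w hw).symm) T z
      have a3 : Aop ν S' g z = expect (cond ν S' x) g' := by
        rw [Junta_Aop S' g z x hzS,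
          show Aop ν S' g x = expect (cond ν S' x) g from rfl]
        exact expect_congr_support fun w hw => (hsupp w hw).symm
      rw [a1, a2, a3]
    rw [e]
    have hC := lemC h0' h1' hpp' hε hg'j T hiT
    have hC2 := normSq_le_of_l2 h0' (by positivity) hC
    have eg : normSq (cond ν S' x) g' = normSq (cond ν S' x) g :=
      normSq_congr_support hsupp
    rw [eg] at hC2
    calc ν x * normSq (cond ν S' x)
          (fun z => Aop (cond ν S' x) T g' z - expect (cond ν S' x) g')
        ≤ ν x * (((T.card : ℝ) * ε) ^ 2 * normSq (cond ν S' x) g) :=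
          mul_le_mul_of_nonneg_left hC2 (h0 x)
      _ = ((T.card : ℝ) * ε) ^ 2 * (ν x * normSq (cond ν S' x) g) := by ring

lemma lemF (h0 : ∀ z, 0 ≤ ν z) (h1 : ∑ z, ν z = 1) (hpp : PP ν ε) (hε : 0 ≤ ε)
    (T₂ : Finset (Fin k)) (f : (∀ i, V i) → ℝ) (T₁ : Finset (Fin k)) :
    Disjoint T₁ T₂ →
    l2norm ν (fun x => Aop ν T₂ (Aop ν T₁ f) x - expect ν f) ≤
      (T₁.card : ℝ) * T₂.card * ε * l2norm ν f := by
  induction T₁ using Finset.induction_on with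
  | empty =>
    intro _
    have e : ∀ x, ν x ≠ 0 → Aop ν T₂ (Aop ν ∅ f) x - expect ν f = 0 := by
      intro x hx
      have hm : marg ν T₂ x ≠ 0 := fun hc =>
        hx (le_antisymm (hc ▸ self_le_marg h0 T₂ x) (h0 x))
      have eA : Aop ν T₂ (Aop ν ∅ f) x = expect ν f := by
        rw [Aop_congr_support (g := fun _ => expect ν f)
          (fun w _ => Aop_empty h1 f w) T₂ x, Aop_def]
        have : ∀ z : (∀ i, V i), cond ν T₂ x z * expect ν f
            = cond ν T₂ x z * expect ν f := fun z => rfl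
        rw [← Finset.sum_mul, sum_cond hm, one_mul]
      rw [eA, sub_self]
    have e2 : normSq ν (fun x => Aop ν T₂ (Aop ν ∅ f) x - expect ν f) = 0 := by
      rw [normSq_congr_support (g := fun _ : (∀ i, V i) => (0:ℝ)) e, normSq_def]
      simp
    rw [l2norm_def, e2, Real.sqrt_zero]
    have : ((∅ : Finset (Fin k)).card : ℝ) = 0 := by simp
    rw [this, zero_mul, zero_mul, zero_mul]
  | @insert i R hiR ih =>
    intro hdisj
    have hdisj' : Disjoint R T₂ := Disjoint.mono_left (Finset.subset_insert i R) hdisj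
    have hiT₂ : i ∉ T₂ := fun hc =>
      (Finset.disjoint_left.1 hdisj (Finset.mem_insert_self i R)) hc
    set g := Aop ν (insert i R) f with hgdef
    have hgJ : Junta (insert i R) g := Junta_Aop _ f
    have edec : (fun x => Aop ν T₂ g x - expect ν f)
        = (fun x => Aop ν T₂ (fun z => Aop ν (T₂ ∪ R) g z - Aop ν R g z) x
            + (Aop ν T₂ (Aop ν R f) x - expect ν f)) := by
      funext x
      rw [Aop_sub]
      rw [show Aop ν T₂ (Aop ν (T₂ ∪ R) g) x = Aop ν T₂ g x from
        tower h0 Finset.subset_union_left g x]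
      rw [show Aop ν R g = Aop ν R f from
        funext fun y => tower h0 (Finset.subset_insert i R) f y]
      ring
    rw [edec]
    refine le_trans (l2norm_triangle h0 _ _) ?_
    have hD : normSq ν (fun z => Aop ν (T₂ ∪ R) g z - Aop ν R g z)
        ≤ ((T₂.card : ℝ) * ε) ^ 2 * normSq ν g :=
      lemD h0 hpp hε (fun hc => hiR hc) hiT₂ hgJ
    have b1 : l2norm ν (fun x => Aop ν T₂ (fun z => Aop ν (T₂ ∪ R) g z - Aop ν R g z) x)
        ≤ (T₂.card : ℝ) * ε * l2norm ν f := by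
      refine le_trans (l2norm_Aop_le h0 T₂ _) ?_
      refine le_trans (l2_le_of_normSq_le (by positivity) hD) ?_
      exact mul_le_mul_of_nonneg_left (l2norm_Aop_le h0 _ f) (by positivity)
    have b2 := ih hdisj'
    calc l2norm ν (fun x => Aop ν T₂ (fun z => Aop ν (T₂ ∪ R) g z - Aop ν R g z) x)
          + l2norm ν (fun x => Aop ν T₂ (Aop ν R f) x - expect ν f)
        ≤ (T₂.card : ℝ) * ε * l2norm ν f
          + (R.card : ℝ) * T₂.card * ε * l2norm ν f := add_le_add b1 b2
      _ = ((insert i R).card : ℝ) * T₂.card * ε * l2norm ν f := by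
          rw [Finset.card_insert_of_notMem hiR]; push_cast; ring

end Induct

theorem statement11 (k : ℕ) (hk : 1 ≤ k)
    (V : Fin k → Type) [∀ i, Fintype (V i)] [∀ i, DecidableEq (V i)]
    (μ : (∀ i, V i) → ℝ) (ε : ℝ) (hε : 0 ≤ ε) (hμ : IsProb μ) (hprod : EpsProduct μ ε)
    (T₁ T₂ : Finset (Fin k)) (f : (∀ i, V i) → ℝ) :
    l2norm μ (fun x => Aop μ T₂ (Aop μ T₁ f) x - Aop μ (T₁ ∩ T₂) f x) ≤
      (T₁.card : ℝ) * T₂.card * ε * l2norm μ f := by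
  obtain ⟨h0, h1⟩ := hμ
  have hpp : PP μ ε := PP_of_epsProduct hprod
  have hc0 : (0:ℝ) ≤ (T₁.card : ℝ) * T₂.card * ε := by positivity
  apply l2_le_of_normSq_le hc0
  rw [normSq_decomp h0 (T₁ ∩ T₂), normSq_decomp h0 (T₁ ∩ T₂) (ν := μ) f,
    Finset.mul_sum]
  refine Finset.sum_le_sum fun x _ => ?_
  by_cases hx : μ x = 0
  · simp [hx]
  · have hmS : marg μ (T₁ ∩ T₂) x ≠ 0 := fun hc =>
      hx (le_antisymm (hc ▸ self_le_marg h0 (T₁ ∩ T₂) x) (h0 x))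
    have h0' : ∀ w, 0 ≤ cond μ (T₁ ∩ T₂) x w := cond_nonneg h0 _ x
    have h1' : ∑ w, cond μ (T₁ ∩ T₂) x w = 1 := sum_cond hmS
    have hpp' : PP (cond μ (T₁ ∩ T₂) x) ε := PP_cond h0 hpp _ x
    have hdisj : Disjoint (T₁ \ (T₁ ∩ T₂)) (T₂ \ (T₁ ∩ T₂)) := by
      rw [Finset.disjoint_left]
      intro a ha hb
      rw [Finset.mem_sdiff] at ha hb
      exact ha.2 (Finset.mem_inter.2 ⟨ha.1, hb.1⟩)
    have e : normSq (cond μ (T₁ ∩ T₂) x)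
          (fun z => Aop μ T₂ (Aop μ T₁ f) z - Aop μ (T₁ ∩ T₂) f z)
        = normSq (cond μ (T₁ ∩ T₂) x)
            (fun z => Aop (cond μ (T₁ ∩ T₂) x) (T₂ \ (T₁ ∩ T₂))
                (Aop (cond μ (T₁ ∩ T₂) x) (T₁ \ (T₁ ∩ T₂)) f) z
              - expect (cond μ (T₁ ∩ T₂) x) f) := by
      apply normSq_congr_support
      intro z hz
      have hzS : ∀ t ∈ T₁ ∩ T₂, z t = x t := agree_of_cond_ne_zero hz
      have a1 : Aop μ T₂ (Aop μ T₁ f) z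
          = Aop (cond μ (T₁ ∩ T₂) x) (T₂ \ (T₁ ∩ T₂)) (Aop μ T₁ f) z := by
        rw [Aop_cond h0 hzS (T₂ \ (T₁ ∩ T₂)),
          Finset.union_sdiff_of_subset Finset.inter_subset_right]
      have a2 : Aop (cond μ (T₁ ∩ T₂) x) (T₂ \ (T₁ ∩ T₂)) (Aop μ T₁ f) z
          = Aop (cond μ (T₁ ∩ T₂) x) (T₂ \ (T₁ ∩ T₂))
              (Aop (cond μ (T₁ ∩ T₂) x) (T₁ \ (T₁ ∩ T₂)) f) z := by
        apply Aop_congr_support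
        intro w hw
        have hwS : ∀ t ∈ T₁ ∩ T₂, w t = x t := agree_of_cond_ne_zero hw
        rw [Aop_cond h0 hwS (T₁ \ (T₁ ∩ T₂)),
          Finset.union_sdiff_of_subset Finset.inter_subset_left]
      have a3 : Aop μ (T₁ ∩ T₂) f z = expect (cond μ (T₁ ∩ T₂) x) f := by
        rw [Junta_Aop (T₁ ∩ T₂) f z x hzS]; rfl
      rw [a1, a2, a3]
    rw [e]
    have hF := lemF h0' h1' hpp' hε (T₂ \ (T₁ ∩ T₂)) f (T₁ \ (T₁ ∩ T₂)) hdisj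
    have hF2 := normSq_le_of_l2 h0' (by positivity) hF
    have hle : (((T₁ \ (T₁ ∩ T₂)).card : ℝ) * ((T₂ \ (T₁ ∩ T₂)).card : ℝ) * ε) ^ 2
          * normSq (cond μ (T₁ ∩ T₂) x) f
        ≤ ((T₁.card : ℝ) * T₂.card * ε) ^ 2 * normSq (cond μ (T₁ ∩ T₂) x) f := by
      have c1 : (((T₁ \ (T₁ ∩ T₂)).card : ℝ)) ≤ T₁.card := by
        exact_mod_cast Finset.card_le_card Finset.sdiff_subset
      have c2 : (((T₂ \ (T₁ ∩ T₂)).card : ℝ)) ≤ T₂.card := by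
        exact_mod_cast Finset.card_le_card Finset.sdiff_subset
      have hn := normSq_nonneg' h0' f
      have d1 : (0:ℝ) ≤ ((T₁ \ (T₁ ∩ T₂)).card : ℝ) := by positivity
      have d2 : (0:ℝ) ≤ ((T₂ \ (T₁ ∩ T₂)).card : ℝ) := by positivity
      have key : (((T₁ \ (T₁ ∩ T₂)).card : ℝ) * ((T₂ \ (T₁ ∩ T₂)).card : ℝ) * ε)
          ≤ ((T₁.card : ℝ) * T₂.card * ε) := by
        refine mul_le_mul_of_nonneg_right ?_ hε
        exact mul_le_mul c1 c2 d2 (by positivity)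
      refine mul_le_mul_of_nonneg_right (pow_le_pow_left₀ (by positivity) key 2) hn
    calc μ x * normSq (cond μ (T₁ ∩ T₂) x)
          (fun z => Aop (cond μ (T₁ ∩ T₂) x) (T₂ \ (T₁ ∩ T₂))
              (Aop (cond μ (T₁ ∩ T₂) x) (T₁ \ (T₁ ∩ T₂)) f) z
            - expect (cond μ (T₁ ∩ T₂) x) f)
        ≤ μ x * (((T₁.card : ℝ) * T₂.card * ε) ^ 2 * normSq (cond μ (T₁ ∩ T₂) x) f) :=
          mul_le_mul_of_nonneg_left (le_trans hF2 hle) (h0 x)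
      _ = ((T₁.card : ℝ) * T₂.card * ε) ^ 2 * (μ x * normSq (cond μ (T₁ ∩ T₂) x) f) := by
          ring

end GLL
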